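/- Let f ≥ 1 and for each i ∈ {1,…,f} let [lᵢ, uᵢ] ⊆ [0,1] be a closed interval. Then the polytope Q = {x ∈ ℝ^f : xᵢ ≥ 0 for all i, Σᵢ xᵢ = 1, and lᵢ ≤ xᵢ ≤ uᵢ for all i} has at most f·2^{f−1} extreme points. -/

import Mathlib

noncomputable def gmap (f : ℕ) (l u : Fin f → ℝ) :
    (Σ i : Fin f, ({j : Fin f // j ≠ i} → Bool)) → Fin f → ℝ :=
  fun p j =>
    if h : j = p.1 then
      1 - ∑ k : {j : Fin f // j ≠ p.1}, (if p.2 k then u k.1 else l k.1)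
    else if p.2 ⟨j, h⟩ then u j else l j

theorem stmt17 (f : ℕ) (hf : 1 ≤ f) (l u : Fin f → ℝ)
    (hl : ∀ i, 0 ≤ l i) (hlu : ∀ i, l i ≤ u i) (hu : ∀ i, u i ≤ 1) :
    (Set.extremePoints ℝ {x : Fin f → ℝ | (∀ i, 0 ≤ x i) ∧ (∑ i, x i) = 1 ∧
        ∀ i, x i ∈ Set.Icc (l i) (u i)}).Finite ∧
    (Set.extremePoints ℝ {x : Fin f → ℝ | (∀ i, 0 ≤ x i) ∧ (∑ i, x i) = 1 ∧
        ∀ i, x i ∈ Set.Icc (l i) (u i)}).ncard ≤ f * 2 ^ (f - 1) := by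
  classical
  set Q : Set (Fin f → ℝ) := {x : Fin f → ℝ | (∀ i, 0 ≤ x i) ∧ (∑ i, x i) = 1 ∧
        ∀ i, x i ∈ Set.Icc (l i) (u i)} with hQ
  -- key inclusion
  have hsub : Set.extremePoints ℝ Q ⊆ Set.range (gmap f l u) := by
    intro x hx
    obtain ⟨hxQ, hext⟩ := hx
    obtain ⟨hx0, hx1, hxI⟩ := hxQ
    -- at most one strictly interior coordinate
    have claim : ∀ i j : Fin f, i ≠ j → l i < x i → x i < u i →
        l j < x j → x j < u j → False := by
      intro i j hij hli hui hlj huj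
      set ε : ℝ := min (min (x i - l i) (u i - x i)) (min (x j - l j) (u j - x j)) with hε
      have hεpos : 0 < ε := by
        apply lt_min <;> apply lt_min <;> linarith
      have hε1 : ε ≤ x i - l i := le_trans (min_le_left _ _) (min_le_left _ _)
      have hε2 : ε ≤ u i - x i := le_trans (min_le_left _ _) (min_le_right _ _)
      have hε3 : ε ≤ x j - l j := le_trans (min_le_right _ _) (min_le_left _ _)
      have hε4 : ε ≤ u j - x j := le_trans (min_le_right _ _) (min_le_right _ _)
      set d : Fin f → ℝ := fun k => (if k = i then ε else 0) - (if k = j then ε else 0) with hd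
      have hdi : d i = ε := by simp [hd, hij.symm, hij]
      have hdj : d j = -ε := by simp [hd, hij, Ne.symm hij]
      have hdk : ∀ k, k ≠ i → k ≠ j → d k = 0 := by
        intro k h1 h2; simp [hd, h1, h2]
      have hdsum : ∑ k, d k = 0 := by
        simp [hd, Finset.sum_sub_distrib, Finset.sum_ite_eq']
      have hmem : ∀ s : ℝ, s = 1 ∨ s = -1 → (fun k => x k + s * d k) ∈ Q := by
        intro s hs
        refine ⟨?_, ?_, ?_⟩
        · intro k
          rcases eq_or_ne k i with rfl | h1
          · rcases hs with rfl | rfl <;> simp [hdi] <;> nlinarith [hl k]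
          rcases eq_or_ne k j with rfl | h2
          · rcases hs with rfl | rfl <;> simp [hdj] <;> nlinarith [hl k]
          · simp [hdk k h1 h2]; exact hx0 k
        · simp [Finset.sum_add_distrib, hx1, ← Finset.mul_sum, hdsum]
        · intro k
          rcases eq_or_ne k i with rfl | h1
          · rcases hs with rfl | rfl <;> simp [hdi] <;> constructor <;> linarith [(hxI k).1, (hxI k).2]
          rcases eq_or_ne k j with rfl | h2
          · rcases hs with rfl | rfl <;> simp [hdj] <;> constructor <;> linarith [(hxI k).1, (hxI k).2]
          · simp [hdk k h1 h2]; exact hxI k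
      have hy := hmem 1 (Or.inl rfl)
      have hz := hmem (-1) (Or.inr rfl)
      have hseg : x ∈ openSegment ℝ (fun k => x k + 1 * d k) (fun k => x k + (-1) * d k) := by
        refine ⟨1/2, 1/2, by norm_num, by norm_num, by norm_num, ?_⟩
        funext k
        simp only [Pi.add_apply, Pi.smul_apply, smul_eq_mul]
        ring
      have := (hext hy hz hseg)
      have := congrFun this i
      simp [hdi] at this
      exact hεpos.ne' this
    -- pick the possibly-interior index
    obtain ⟨i, hi⟩ : ∃ i : Fin f, ∀ j, j ≠ i → x j = l j ∨ x j = u j := by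
      by_cases hex : ∃ i₀, l i₀ < x i₀ ∧ x i₀ < u i₀
      · obtain ⟨i₀, h1, h2⟩ := hex
        refine ⟨i₀, fun j hj => ?_⟩
        rcases eq_or_lt_of_le (hxI j).1 with h | hlj
        · exact Or.inl h.symm
        rcases eq_or_lt_of_le (hxI j).2 with h | huj
        · exact Or.inr h
        exact absurd (claim i₀ j (Ne.symm hj) h1 h2 hlj huj) (fun h => h)
      · refine ⟨⟨0, hf⟩, fun j _ => ?_⟩
        push_neg at hex
        rcases eq_or_lt_of_le (hxI j).1 with h | hlj
        · exact Or.inl h.symm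
        rcases eq_or_lt_of_le (hxI j).2 with h | huj
        · exact Or.inr h
        exact absurd (hex j hlj) (not_le.mpr huj)
    refine ⟨⟨i, fun k => if x k.1 = u k.1 then true else false⟩, ?_⟩
    funext j
    by_cases h : j = i
    · subst h
      simp only [gmap, dif_pos rfl]
      have hterm : ∀ k : {m : Fin f // m ≠ j},
          (if (if x k.1 = u k.1 then true else false) = true then u k.1 else l k.1) = x k.1 := by
        intro k
        by_cases hk : x k.1 = u k.1
        · simp [hk]
        · simp [hk]
          rcases hi k.1 k.2 with h | h
          · exact h.symm
          · exact absurd h hk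
      rw [Finset.sum_congr rfl (fun k _ => hterm k)]
      have : ∑ k : {m : Fin f // m ≠ j}, x k.1 =
          ∑ k ∈ Finset.univ.erase j, x k := by
        rw [Finset.sum_subtype (p := fun m => m ≠ j) (Finset.univ.erase j)
          (by intro m; simp [Finset.mem_erase]) x]
      rw [this, Finset.sum_erase_eq_sub (Finset.mem_univ j), hx1]
      simp
    · simp only [gmap, dif_neg h]
      by_cases hk : x j = u j
      · simp [hk]
      · simp [hk]
        rcases hi j h with h' | h'
        · exact h'.symm
        · exact absurd h' hk
  -- counting
  have hcard : Nat.card (Σ i : Fin f, ({j : Fin f // j ≠ i} → Bool)) = f * 2 ^ (f - 1) := by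
    rw [Nat.card_eq_fintype_card, Fintype.card_sigma]
    have h1 : ∀ i : Fin f, Fintype.card ({j : Fin f // j ≠ i} → Bool) = 2 ^ (f - 1) := by
      intro i
      rw [Fintype.card_fun, Fintype.card_bool]
      congr 1
      have := Fintype.card_subtype_compl (fun j : Fin f => j = i)
      simp [Fintype.card_subtype_eq] at this
      simpa using this
    simp [h1, Finset.sum_const, mul_comm]
  have hfinr : (Set.range (gmap f l u)).Finite := Set.finite_range _
  refine ⟨hfinr.subset hsub, ?_⟩
  calc (Set.extremePoints ℝ Q).ncard ≤ (Set.range (gmap f l u)).ncard :=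
        Set.ncard_le_ncard hsub hfinr
    _ ≤ f * 2 ^ (f - 1) := by
        rw [← Set.image_univ]
        calc (gmap f l u '' Set.univ).ncard ≤ (Set.univ : Set (Σ i : Fin f, ({j : Fin f // j ≠ i} → Bool))).ncard :=
              Set.ncard_image_le Set.finite_univ
          _ = f * 2 ^ (f - 1) := by rw [Set.ncard_univ, hcard]
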